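/- arXiv:2212.08357 — 2 statements merged into one kernel-verified Lean document; each statement's English description precedes it below -/
import Mathlib

section
/- Let G be a finite group and let k_r(G) denote the number of real conjugacy classes of G (classes C with C = C^{-1}). Then the number of pairs (g,h) ∈ G² with g²h² = 1 equals |G| · k_r(G). -/
private lemma isConj_inv_aux {G : Type*} [Group G] {a b : G} (h : IsConj a b) :
    IsConj a⁻¹ b⁻¹ := by
  obtain ⟨c, hc⟩ := isConj_iff.mp h
  exact isConj_iff.mpr ⟨c, by rw [← hc]; group⟩

/-- If `x` is conjugate to `x⁻¹`, the solutions `g` of `g x g⁻¹ x = 1` form a coset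
of the stabilizer of `x` under the conjugation action. -/
private lemma card_sol_eq_card_stabilizer {G : Type*} [Group G] {x : G} (hx : IsConj x x⁻¹) :
    Nat.card {g : G // g * x * g⁻¹ * x = 1} =
      Nat.card (MulAction.stabilizer (ConjAct G) x) := by
  obtain ⟨g₀, hg₀⟩ := isConj_iff.mp hx
  refine Nat.card_congr ?_
  refine
    { toFun := fun g => ⟨ConjAct.toConjAct (g₀⁻¹ * g.1), ?_⟩
      invFun := fun u => ⟨g₀ * ConjAct.ofConjAct u.1, ?_⟩
      left_inv := fun g => ?_
      right_inv := fun u => ?_ }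
  · have hg : g.1 * x * g.1⁻¹ = x⁻¹ := by
      have := g.2
      rw [mul_eq_one_iff_eq_inv] at this
      exact this
    rw [MulAction.mem_stabilizer_iff, ConjAct.toConjAct_smul]
    calc g₀⁻¹ * g.1 * x * (g₀⁻¹ * g.1)⁻¹ = g₀⁻¹ * (g.1 * x * g.1⁻¹) * g₀ := by group
    _ = g₀⁻¹ * (g₀ * x * g₀⁻¹) * g₀ := by rw [hg, ← hg₀]
    _ = x := by group
  · have hu : ConjAct.ofConjAct u.1 * x * (ConjAct.ofConjAct u.1)⁻¹ = x := by
      have := u.2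
      rwa [MulAction.mem_stabilizer_iff, ConjAct.smul_def] at this
    calc g₀ * ConjAct.ofConjAct u.1 * x * (g₀ * ConjAct.ofConjAct u.1)⁻¹ * x
        = g₀ * (ConjAct.ofConjAct u.1 * x * (ConjAct.ofConjAct u.1)⁻¹) * g₀⁻¹ * x := by group
    _ = g₀ * x * g₀⁻¹ * x := by rw [hu]
    _ = 1 := by rw [hg₀]; group
  · ext; simp
  · ext; simp

/-- If `x` is not conjugate to `x⁻¹`, there are no solutions. -/
private lemma card_sol_eq_zero {G : Type*} [Group G] {x : G} (hx : ¬ IsConj x x⁻¹) :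
    Nat.card {g : G // g * x * g⁻¹ * x = 1} = 0 := by
  rw [Nat.card_eq_zero]
  left
  refine ⟨fun g => hx (isConj_iff.mpr ⟨g.1, ?_⟩)⟩
  have := g.2
  rw [mul_eq_one_iff_eq_inv] at this
  exact this

/-- A conjugacy class is real iff one (any) of its elements is conjugate to its inverse. -/
private lemma real_iff {G : Type*} [Group G] (a : G) :
    (ConjClasses.mk a).carrier⁻¹ = (ConjClasses.mk a).carrier ↔ IsConj a a⁻¹ := by
  constructor
  · intro h
    have ha : a ∈ (ConjClasses.mk a).carrier := ConjClasses.mem_carrier_mk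
    have : a ∈ (ConjClasses.mk a).carrier⁻¹ := by rw [h]; exact ha
    rw [Set.mem_inv] at this
    rw [ConjClasses.mem_carrier_iff_mk_eq, ConjClasses.mk_eq_mk_iff_isConj] at this
    exact this.symm
  · intro h
    ext b
    rw [Set.mem_inv, ConjClasses.mem_carrier_iff_mk_eq, ConjClasses.mem_carrier_iff_mk_eq,
      ConjClasses.mk_eq_mk_iff_isConj, ConjClasses.mk_eq_mk_iff_isConj]
    constructor
    · intro hb
      have : IsConj b a⁻¹ := by simpa using isConj_inv_aux hb
      exact this.trans h.symm
    · intro hb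
      have : IsConj b⁻¹ a⁻¹ := isConj_inv_aux hb
      exact this.trans h.symm

/-- Orbit-stabilizer for conjugation, `Nat.card` version. -/
private lemma carrier_mul_stab {G : Type*} [Group G] [Fintype G] (x : G) :
    Nat.card (ConjClasses.mk x).carrier * Nat.card (MulAction.stabilizer (ConjAct G) x) =
      Fintype.card G := by
  have h := Nat.card_congr (MulAction.orbitProdStabilizerEquivGroup (ConjAct G) x)
  rw [Nat.card_prod] at h
  rw [← ConjAct.orbit_eq_carrier_conjClasses, h, Nat.card_eq_fintype_card]
  exact Fintype.card_congr ConjAct.toConjAct.toEquiv.symm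

/-- The number of pairs `(g,h)` with `g²h² = 1` equals `|G|` times the number of real
conjugacy classes of `G`. -/
theorem stmt_3 (G : Type*) [Group G] [Fintype G] :
    Nat.card {p : G × G // p.1 ^ 2 * p.2 ^ 2 = 1} =
      Fintype.card G * Nat.card {c : ConjClasses G // c.carrier⁻¹ = c.carrier} := by
  classical
  have : Fintype (ConjClasses G) := Fintype.ofFinite _
  -- Step 1: reindex pairs (g,h) ↦ (x, g) with x = g*h; condition becomes g x g⁻¹ x = 1
  have e0 : {p : G × G // p.1 ^ 2 * p.2 ^ 2 = 1} ≃
      {q : G × G // q.2 * q.1 * q.2⁻¹ * q.1 = 1} := by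
    refine Equiv.subtypeEquiv
      ⟨fun p => (p.1 * p.2, p.1), fun q => (q.2, q.2⁻¹ * q.1),
        fun p => by simp, fun q => by simp⟩ fun p => ?_
    dsimp
    constructor
    · intro h
      calc p.1 * (p.1 * p.2) * p.1⁻¹ * (p.1 * p.2) = p.1 ^ 2 * p.2 ^ 2 := by
            rw [pow_two, pow_two]; group
      _ = 1 := h
    · intro h
      calc p.1 ^ 2 * p.2 ^ 2 = p.1 * (p.1 * p.2) * p.1⁻¹ * (p.1 * p.2) := by
            rw [pow_two, pow_two]; group
      _ = 1 := h
  have key : Nat.card {p : G × G // p.1 ^ 2 * p.2 ^ 2 = 1} =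
      ∑ x : G, Nat.card {g : G // g * x * g⁻¹ * x = 1} := by
    rw [Nat.card_congr (e0.trans (Equiv.subtypeProdEquivSigmaSubtype
      (fun (x : G) (g : G) => g * x * g⁻¹ * x = 1)))]
    rw [Nat.card_eq_fintype_card, Fintype.card_sigma]
    exact Finset.sum_congr rfl fun x _ => (Nat.card_eq_fintype_card).symm
  rw [key]
  -- Step 2: group by conjugacy classes
  set F : G → ℕ := fun x => Nat.card {g : G // g * x * g⁻¹ * x = 1} with hF
  rw [← Finset.sum_fiberwise Finset.univ ConjClasses.mk F]
  -- Step 3: each fiber sums to |G| if real, 0 otherwise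
  have inner : ∀ c : ConjClasses G,
      ∑ x ∈ Finset.univ.filter (fun x => ConjClasses.mk x = c), F x =
        if c.carrier⁻¹ = c.carrier then Fintype.card G else 0 := by
    intro c
    obtain ⟨a, rfl⟩ := ConjClasses.mk_surjective c
    by_cases hreal : IsConj a a⁻¹
    · rw [if_pos ((real_iff a).mpr hreal)]
      -- every element of the class is conjugate to its inverse
      have hx : ∀ x ∈ Finset.univ.filter (fun x => ConjClasses.mk x = ConjClasses.mk a),
          IsConj x x⁻¹ := by
        intro x hxmem
        rw [Finset.mem_filter, ConjClasses.mk_eq_mk_iff_isConj] at hxmem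
        have hax : IsConj a x := hxmem.2.symm
        exact hax.symm.trans (hreal.trans (isConj_inv_aux hax))
      -- multiply through by the class size
      set m : ℕ := Nat.card (ConjClasses.mk a).carrier with hm
      have hmpos : 0 < m := by
        rw [hm]
        exact Nat.card_pos_iff.mpr ⟨⟨a, ConjClasses.mem_carrier_mk⟩, Set.Finite.to_subtype
          (Set.toFinite _)⟩
      have e2 : {x : G // ConjClasses.mk x = ConjClasses.mk a} ≃ (ConjClasses.mk a).carrier :=
        Equiv.subtypeEquivRight fun x => ConjClasses.mem_carrier_iff_mk_eq.symm
      have hfib : (Finset.univ.filter (fun x => ConjClasses.mk x = ConjClasses.mk a)).card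
          = m := by
        rw [hm, ← Nat.card_congr e2, Nat.card_eq_fintype_card]
        exact (Fintype.card_subtype _).symm
      refine Nat.eq_of_mul_eq_mul_left hmpos ?_
      rw [Finset.mul_sum]
      have : ∀ x ∈ Finset.univ.filter (fun x => ConjClasses.mk x = ConjClasses.mk a),
          m * F x = Fintype.card G := by
        intro x hxmem
        have hcl : ConjClasses.mk x = ConjClasses.mk a := (Finset.mem_filter.mp hxmem).2
        rw [hF]
        simp only
        rw [card_sol_eq_card_stabilizer (hx x hxmem), hm, ← hcl]
        exact carrier_mul_stab x
      rw [Finset.sum_congr rfl this, Finset.sum_const, hfib, smul_eq_mul]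
    · rw [if_neg (fun h => hreal ((real_iff a).mp h))]
      refine Finset.sum_eq_zero fun x hxmem => ?_
      rw [Finset.mem_filter, ConjClasses.mk_eq_mk_iff_isConj] at hxmem
      have hax : IsConj a x := hxmem.2.symm
      refine card_sol_eq_zero fun hxx => hreal ?_
      exact hax.trans (hxx.trans (isConj_inv_aux hax.symm))
  rw [Finset.sum_congr rfl fun c _ => inner c]
  -- Step 4: compute the right-hand side
  rw [Finset.sum_ite, Finset.sum_const, Finset.sum_const_zero, add_zero, smul_eq_mul,
    Nat.card_eq_fintype_card, mul_comm]
  congr 1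
  exact (Fintype.card_subtype _).symm
end

section
/- Let G be a finite group, N = ⟨g² : g ∈ G⟩ the subgroup generated by all squares, and s(n) = |{(g₁,…,gₙ) ∈ Gⁿ : g₁²⋯gₙ² = 1}|. Then lim_{n→∞} s(n)/|G|^{n-1} = |G/N|. -/
open Finset

section Aux

variable {G : Type} [Group G] [Fintype G] [DecidableEq G]

/-- number of n-tuples whose squares multiply to x -/
def cnt (n : ℕ) (x : G) : ℕ :=
  ((univ : Finset (Fin n → G)).filter fun v => ((List.ofFn v).map fun g => g ^ 2).prod = x).card

lemma cnt_zero (x : G) : cnt 0 x = if x = 1 then 1 else 0 := by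
  simp only [cnt]
  rw [Finset.univ_unique, Finset.filter_singleton]
  by_cases h : x = 1 <;> simp [h, eq_comm]

omit [Fintype G] [DecidableEq G] in
lemma sq_prod_cons {n : ℕ} (g : G) (w : Fin n → G) :
    ((List.ofFn (Fin.cons g w : Fin (n+1) → G)).map fun g => g ^ 2).prod
      = g ^ 2 * ((List.ofFn w).map fun g => g ^ 2).prod := by
  rw [List.ofFn_succ]
  simp [Fin.cons_succ]

lemma cnt_succ (n : ℕ) (x : G) :
    cnt (n + 1) x = ∑ g : G, cnt n ((g ^ 2)⁻¹ * x) := by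
  rw [cnt, Finset.card_eq_sum_card_fiberwise
    (f := fun v : Fin (n+1) → G => v 0) (t := univ) (fun _ _ => mem_univ _)]
  refine Finset.sum_congr rfl fun g _ => ?_
  rw [cnt]
  refine (Finset.card_nbij' (i := fun w => Fin.cons g w) (j := fun v => Fin.tail v) ?_ ?_ ?_ ?_).symm
  · intro w hw
    simp only [mem_coe, mem_filter, mem_univ, true_and] at hw ⊢
    rw [sq_prod_cons, hw]
    constructor
    · group
    · simp
  · intro v hv
    simp only [mem_coe, mem_filter, mem_univ, true_and] at hv ⊢
    obtain ⟨h1, h2⟩ := hv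
    have hv' : v = Fin.cons g (Fin.tail v) := by
      rw [← h2]; exact (Fin.cons_self_tail v).symm
    rw [hv', sq_prod_cons] at h1
    rw [eq_inv_mul_iff_mul_eq, h1]
  · intro w _
    simp [Fin.tail_cons]
  · intro v hv
    simp only [mem_coe, mem_filter, mem_univ, true_and] at hv
    rw [← hv.2]
    exact Fin.cons_self_tail v

lemma cnt_conv (m n : ℕ) (x : G) :
    cnt (m + n) x = ∑ y : G, cnt m y * cnt n (y⁻¹ * x) := by
  induction m generalizing x with
  | zero =>
    rw [zero_add, Finset.sum_eq_single (1 : G)]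
    · simp [cnt_zero]
    · intro y _ hy; simp [cnt_zero, hy]
    · simp
  | succ m ih =>
    have h1 : m + 1 + n = (m + n) + 1 := by omega
    rw [h1, cnt_succ]
    simp only [ih]
    simp only [cnt_succ, Finset.sum_mul]
    conv_rhs => rw [Finset.sum_comm]
    refine Finset.sum_congr rfl fun g _ => ?_
    refine Fintype.sum_bijective (fun y => g ^ 2 * y) (Group.mulLeft_bijective _) _ _ (fun y => ?_)
    have e1 : (g ^ 2)⁻¹ * (g ^ 2 * y) = y := by group
    have e2 : (g ^ 2 * y)⁻¹ * x = y⁻¹ * ((g ^ 2)⁻¹ * x) := by group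
    rw [e1, e2]

lemma cnt_sum (n : ℕ) : ∑ x : G, cnt n x = Fintype.card G ^ n := by
  simp only [cnt]
  rw [← Finset.card_eq_sum_card_fiberwise
    (f := fun v : Fin n → G => ((List.ofFn v).map fun g => g ^ 2).prod)
    (t := univ) (fun _ _ => mem_univ _)]
  simp [Finset.card_univ]

lemma cnt_supp {n : ℕ} {x : G} (h : cnt n x ≠ 0) :
    x ∈ Subgroup.closure (Set.range fun g : G => g ^ 2) := by
  obtain ⟨v, hv⟩ := Finset.card_ne_zero.mp h
  simp only [mem_filter, mem_univ, true_and] at hv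
  rw [← hv]
  refine Subgroup.list_prod_mem _ fun z hz => ?_
  obtain ⟨g, _, rfl⟩ := List.mem_map.mp hz
  exact Subgroup.subset_closure ⟨g, rfl⟩

lemma cnt_mono {n m : ℕ} (h : n ≤ m) (x : G) : cnt n x ≤ cnt m x := by
  refine monotone_nat_of_le_succ (f := fun k => cnt k x) (fun k => ?_) h
  show cnt k x ≤ cnt (k + 1) x
  rw [cnt_succ]
  have h := Finset.single_le_sum (f := fun g : G => cnt k ((g ^ 2)⁻¹ * x))
    (fun _ _ => Nat.zero_le _) (mem_univ (1 : G))
  simpa using h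

lemma exists_cnt (x : G) (hx : x ∈ Subgroup.closure (Set.range fun g : G => g ^ 2)) :
    ∃ n, 1 ≤ cnt n x := by
  set S : Set G := Set.range fun g : G => g ^ 2 with hS
  have hx' : x ∈ Submonoid.closure (S ∪ S⁻¹) := by
    rw [← Subgroup.closure_toSubmonoid]; exact hx
  obtain ⟨l, hl, hprod⟩ := Submonoid.exists_list_of_mem_closure hx'
  have hsq : ∀ y : G, ∃ g : G, y ∈ l → g ^ 2 = y := by
    intro y
    by_cases hy : y ∈ l
    · rcases hl y hy with h | h
      · obtain ⟨g, hg⟩ := h; exact ⟨g, fun _ => hg⟩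
      · obtain ⟨g, hg⟩ := Set.mem_inv.mp h
        simp only at hg
        exact ⟨g⁻¹, fun _ => by rw [inv_pow, hg, inv_inv]⟩
    · exact ⟨1, fun h => absurd h hy⟩
  choose f hf using hsq
  refine ⟨l.length, ?_⟩
  rw [cnt, Nat.succ_le_iff, Finset.card_pos]
  refine ⟨fun i => f (l.get i), ?_⟩
  simp only [mem_filter, mem_univ, true_and]
  have : (List.ofFn fun i => f (l.get i)).map (fun g => g ^ 2) = l := by
    refine List.ext_getElem (by simp) fun i h1 h2 => ?_
    simp only [List.getElem_map, List.getElem_ofFn]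
    exact hf (l.get ⟨i, by simpa using h2⟩) (l.get_mem _)
  rw [this, hprod]

lemma cnt_pos :
    ∃ k : ℕ, ∀ x : G, x ∈ Subgroup.closure (Set.range fun g : G => g ^ 2) → 1 ≤ cnt k x := by
  have h : ∀ x : G, ∃ n, x ∈ Subgroup.closure (Set.range fun g : G => g ^ 2) → 1 ≤ cnt n x := by
    intro x
    by_cases hx : x ∈ Subgroup.closure (Set.range fun g : G => g ^ 2)
    · obtain ⟨n, hn⟩ := exists_cnt x hx; exact ⟨n, fun _ => hn⟩
    · exact ⟨0, fun h => absurd h hx⟩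
  choose f hf using h
  exact ⟨univ.sup f, fun x hx => (hf x hx).trans (cnt_mono (Finset.le_sup (mem_univ x)) x)⟩

end Aux

section RealPart

variable {G : Type} [Group G] [Fintype G] [DecidableEq G]

noncomputable def pp (n : ℕ) (x : G) : ℝ := (cnt n x : ℝ) / (Fintype.card G : ℝ) ^ n

noncomputable def Nf (G : Type) [Group G] [Fintype G] : Finset G :=
  (Set.toFinite ((Subgroup.closure (Set.range fun g : G => g ^ 2) : Set G))).toFinset

lemma mem_Nf {x : G} : x ∈ Nf G ↔ x ∈ Subgroup.closure (Set.range fun g : G => g ^ 2) :=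
  Set.Finite.mem_toFinset _

lemma Nf_nonempty : (Nf G).Nonempty := ⟨1, mem_Nf.mpr (one_mem _)⟩

lemma cardG_pos : 0 < (Fintype.card G : ℝ) := by
  exact_mod_cast Fintype.card_pos

lemma pp_nonneg (n : ℕ) (x : G) : 0 ≤ pp n x :=
  div_nonneg (Nat.cast_nonneg _) (le_of_lt (pow_pos cardG_pos n))

lemma pp_sum (n : ℕ) : ∑ x : G, pp n x = 1 := by
  simp only [pp]
  rw [← Finset.sum_div, ← Nat.cast_sum, cnt_sum, Nat.cast_pow,
    div_self (pow_ne_zero _ (Nat.cast_ne_zero.mpr Fintype.card_ne_zero))]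

lemma pp_supp {n : ℕ} {x : G} (h : x ∉ Nf G) : pp n x = 0 := by
  have : cnt n x = 0 := by
    by_contra hc
    exact h (mem_Nf.mpr (cnt_supp hc))
  simp [pp, this]

lemma pp_conv (m n : ℕ) (x : G) :
    pp (m + n) x = ∑ y : G, pp m y * pp n (y⁻¹ * x) := by
  simp only [pp, cnt_conv m n x, pow_add]
  push_cast
  rw [Finset.sum_div]
  refine Finset.sum_congr rfl fun y _ => ?_
  field_simp

lemma sum_Nf_pp (n : ℕ) : ∑ y ∈ Nf G, pp n y = 1 := by
  rw [← pp_sum (G := G) n]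
  exact Finset.sum_subset (subset_univ _) (fun y _ hy => pp_supp hy)

lemma shift_mem {x y : G} (hx : x ∈ Nf G) (hy : y ∈ Nf G) : y⁻¹ * x ∈ Nf G := by
  rw [mem_Nf] at *
  exact mul_mem (inv_mem hy) hx

lemma sum_shift {x : G} (hx : x ∈ Nf G) (n : ℕ) :
    ∑ y ∈ Nf G, pp n (y⁻¹ * x) = 1 := by
  rw [← sum_Nf_pp (G := G) n]
  refine Finset.sum_nbij' (i := fun y => y⁻¹ * x) (j := fun z => x * z⁻¹) ?_ ?_ ?_ ?_ ?_
  · intro y hy; exact shift_mem hx hy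
  · intro z hz
    rw [mem_Nf] at *
    exact mul_mem hx (inv_mem hz)
  · intro y _; group
  · intro z _; group
  · intro y _; rfl

noncomputable def Mx (G : Type) [Group G] [Fintype G] [DecidableEq G] (n : ℕ) : ℝ :=
  (Nf G).sup' Nf_nonempty (pp n)

noncomputable def mx (G : Type) [Group G] [Fintype G] [DecidableEq G] (n : ℕ) : ℝ :=
  (Nf G).inf' Nf_nonempty (pp n)

lemma pp_le_Mx {n : ℕ} {x : G} (hx : x ∈ Nf G) : pp n x ≤ Mx G n := Finset.le_sup' _ hx

lemma mx_le_pp {n : ℕ} {x : G} (hx : x ∈ Nf G) : mx G n ≤ pp n x := Finset.inf'_le _ hx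

lemma step_up {j n : ℕ} {x : G} (hx : x ∈ Nf G) {ε : ℝ}
    (hε : ∀ y ∈ Nf G, ε ≤ pp j y) :
    pp (j + n) x ≤ (1 - ε * (Nf G).card) * Mx G n + ε := by
  rw [pp_conv]
  rw [← Finset.sum_subset (subset_univ (Nf G))
    (fun y _ hy => by rw [pp_supp hy, zero_mul])]
  have key : ∑ y ∈ Nf G, pp j y * pp n (y⁻¹ * x)
      = (∑ y ∈ Nf G, (pp j y - ε) * pp n (y⁻¹ * x)) + ε := by
    have h1 : ∑ y ∈ Nf G, ε * pp n (y⁻¹ * x) = ε := by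
      rw [← Finset.mul_sum, sum_shift hx n, mul_one]
    calc ∑ y ∈ Nf G, pp j y * pp n (y⁻¹ * x)
        = ∑ y ∈ Nf G, ((pp j y - ε) * pp n (y⁻¹ * x) + ε * pp n (y⁻¹ * x)) :=
          Finset.sum_congr rfl fun y _ => by ring
      _ = (∑ y ∈ Nf G, (pp j y - ε) * pp n (y⁻¹ * x)) + ∑ y ∈ Nf G, ε * pp n (y⁻¹ * x) :=
          Finset.sum_add_distrib
      _ = _ := by rw [h1]
  rw [key]
  have hb : ∑ y ∈ Nf G, (pp j y - ε) * pp n (y⁻¹ * x)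
      ≤ ∑ y ∈ Nf G, (pp j y - ε) * Mx G n := by
    refine Finset.sum_le_sum fun y hy => ?_
    exact mul_le_mul_of_nonneg_left (pp_le_Mx (shift_mem hx hy)) (sub_nonneg.mpr (hε y hy))
  have heq : ∑ y ∈ Nf G, (pp j y - ε) * Mx G n = (1 - ε * (Nf G).card) * Mx G n := by
    rw [← Finset.sum_mul, Finset.sum_sub_distrib, sum_Nf_pp, Finset.sum_const, nsmul_eq_mul]
    ring
  linarith [hb, heq]

lemma step_down {j n : ℕ} {x : G} (hx : x ∈ Nf G) {ε : ℝ}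
    (hε : ∀ y ∈ Nf G, ε ≤ pp j y) :
    (1 - ε * (Nf G).card) * mx G n + ε ≤ pp (j + n) x := by
  rw [pp_conv]
  rw [← Finset.sum_subset (subset_univ (Nf G))
    (fun y _ hy => by rw [pp_supp hy, zero_mul])]
  have key : ∑ y ∈ Nf G, pp j y * pp n (y⁻¹ * x)
      = (∑ y ∈ Nf G, (pp j y - ε) * pp n (y⁻¹ * x)) + ε := by
    have h1 : ∑ y ∈ Nf G, ε * pp n (y⁻¹ * x) = ε := by
      rw [← Finset.mul_sum, sum_shift hx n, mul_one]
    calc ∑ y ∈ Nf G, pp j y * pp n (y⁻¹ * x)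
        = ∑ y ∈ Nf G, ((pp j y - ε) * pp n (y⁻¹ * x) + ε * pp n (y⁻¹ * x)) :=
          Finset.sum_congr rfl fun y _ => by ring
      _ = (∑ y ∈ Nf G, (pp j y - ε) * pp n (y⁻¹ * x)) + ∑ y ∈ Nf G, ε * pp n (y⁻¹ * x) :=
          Finset.sum_add_distrib
      _ = _ := by rw [h1]
  rw [key]
  have hb : ∑ y ∈ Nf G, (pp j y - ε) * mx G n
      ≤ ∑ y ∈ Nf G, (pp j y - ε) * pp n (y⁻¹ * x) := by
    refine Finset.sum_le_sum fun y hy => ?_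
    exact mul_le_mul_of_nonneg_left (mx_le_pp (shift_mem hx hy)) (sub_nonneg.mpr (hε y hy))
  have heq : ∑ y ∈ Nf G, (pp j y - ε) * mx G n = (1 - ε * (Nf G).card) * mx G n := by
    rw [← Finset.sum_mul, Finset.sum_sub_distrib, sum_Nf_pp, Finset.sum_const, nsmul_eq_mul]
    ring
  linarith [hb, heq]

lemma Mx_le (j n : ℕ) : Mx G (j + n) ≤ Mx G n := by
  refine Finset.sup'_le _ _ fun x hx => ?_
  have := step_up (j := j) (n := n) hx (ε := 0) (fun y hy => pp_nonneg j y)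
  simpa using this

lemma le_mx (j n : ℕ) : mx G n ≤ mx G (j + n) := by
  refine Finset.le_inf' _ _ fun x hx => ?_
  have := step_down (j := j) (n := n) hx (ε := 0) (fun y hy => pp_nonneg j y)
  simpa using this

lemma mx_le_Mx (n : ℕ) : mx G n ≤ Mx G n :=
  le_trans (mx_le_pp (Nf_nonempty.choose_spec)) (pp_le_Mx (Nf_nonempty.choose_spec))

end RealPart

/-- With `N = ⟨g² : g ∈ G⟩`, we have `lim_{n→∞} s(n)/|G|^{n-1} = |G/N|`. -/
theorem stmt_13 {G : Type} [Group G] [Fintype G] :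
    Filter.Tendsto
      (fun n : ℕ => (Nat.card {v : Fin n → G // ((List.ofFn v).map fun g => g ^ 2).prod = 1} : ℝ) /
        (Fintype.card G : ℝ) ^ ((n : ℤ) - 1))
      Filter.atTop
      (nhds ((Subgroup.closure (Set.range fun g : G => g ^ 2)).index : ℝ)) := by
  classical
  obtain ⟨k, hk⟩ := cnt_pos (G := G)
  set ε : ℝ := ((Fintype.card G : ℝ) ^ k)⁻¹ with hε
  have hεpos : 0 < ε := inv_pos.mpr (pow_pos cardG_pos k)
  have hεle : ∀ y ∈ Nf G, ε ≤ pp k y := by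
    intro y hy
    have h1 : (1 : ℝ) ≤ (cnt k y : ℝ) := by exact_mod_cast hk y (mem_Nf.mp hy)
    rw [pp, hε, inv_eq_one_div]
    gcongr
  set θ : ℝ := 1 - ε * (Nf G).card with hθ
  have hcardNf_pos : 0 < ((Nf G).card : ℝ) := by
    exact_mod_cast Finset.card_pos.mpr Nf_nonempty
  have hθ0 : 0 ≤ θ := by
    have h1 := Finset.card_nsmul_le_sum (Nf G) (pp k) ε hεle
    rw [sum_Nf_pp, nsmul_eq_mul] at h1
    rw [hθ]
    nlinarith [h1]
  have hθ1 : θ < 1 := by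
    have h2 : 0 < ε * (Nf G).card := mul_pos hεpos hcardNf_pos
    rw [hθ]; linarith
  set D : ℕ → ℝ := fun n => Mx G n - mx G n with hD
  have hD0 : ∀ n, 0 ≤ D n := fun n => sub_nonneg.mpr (mx_le_Mx n)
  have hcontr : ∀ n, D (k + n) ≤ θ * D n := by
    intro n
    have hup : Mx G (k + n) ≤ θ * Mx G n + ε := by
      refine Finset.sup'_le _ _ fun x hx => ?_
      have h := step_up (j := k) (n := n) hx hεle
      have hring : (1 - ε * (Nf G).card) * Mx G n = θ * Mx G n := by rw [hθ]
      linarith [h, hring]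
    have hdn : θ * mx G n + ε ≤ mx G (k + n) := by
      refine Finset.le_inf' _ _ fun x hx => ?_
      have h := step_down (j := k) (n := n) hx hεle
      have hring : (1 - ε * (Nf G).card) * mx G n = θ * mx G n := by rw [hθ]
      linarith [h, hring]
    have hring2 : θ * Mx G n - θ * mx G n = θ * (Mx G n - mx G n) := by ring
    simp only [hD]
    linarith [hup, hdn, hring2]
  have hanti : ∀ {a b : ℕ}, a ≤ b → D b ≤ D a := by
    intro a b hab
    obtain ⟨j, rfl⟩ := Nat.exists_eq_add_of_le hab
    have h1 := Mx_le (G := G) j a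
    have h2 := le_mx (G := G) j a
    simp only [hD]
    rw [Nat.add_comm a j]
    exact sub_le_sub h1 h2
  have hgeo : ∀ j : ℕ, D (j * k) ≤ θ ^ j * D 0 := by
    intro j
    induction j with
    | zero => simp
    | succ j ih =>
      have he : (j + 1) * k = k + j * k := by ring
      rw [he]
      calc D (k + j * k) ≤ θ * D (j * k) := hcontr _
        _ ≤ θ * (θ ^ j * D 0) := mul_le_mul_of_nonneg_left ih hθ0
        _ = θ ^ (j + 1) * D 0 := by ring
  have hDtend : Filter.Tendsto D Filter.atTop (nhds 0) := by
    rw [Metric.tendsto_atTop]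
    intro δ hδ
    have ht : Filter.Tendsto (fun j : ℕ => θ ^ j * D 0) Filter.atTop (nhds 0) := by
      simpa using (tendsto_pow_atTop_nhds_zero_of_lt_one hθ0 hθ1).mul_const (D 0)
    have hev := ht.eventually (gt_mem_nhds hδ)
    rw [Filter.eventually_atTop] at hev
    obtain ⟨j, hj⟩ := hev
    refine ⟨j * k, fun n hn => ?_⟩
    have h1 : D n ≤ θ ^ j * D 0 := le_trans (hanti hn) (hgeo j)
    rw [Real.dist_eq, sub_zero, abs_of_nonneg (hD0 n)]
    exact lt_of_le_of_lt h1 (hj j le_rfl)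
  set c : ℝ := ((Nf G).card : ℝ)⁻¹ with hc
  have hmid : ∀ n, mx G n ≤ c ∧ c ≤ Mx G n := by
    intro n
    constructor
    · have h1 := Finset.card_nsmul_le_sum (Nf G) (pp n) (mx G n) (fun x hx => mx_le_pp hx)
      rw [sum_Nf_pp, nsmul_eq_mul] at h1
      rw [hc, inv_eq_one_div, le_div_iff₀ hcardNf_pos]
      linarith [h1]
    · have h1 := Finset.sum_le_card_nsmul (Nf G) (pp n) (Mx G n) (fun x hx => pp_le_Mx hx)
      rw [sum_Nf_pp, nsmul_eq_mul] at h1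
      rw [hc, inv_eq_one_div, div_le_iff₀ hcardNf_pos]
      linarith [h1]
  have habs : ∀ n, |pp n (1 : G) - c| ≤ D n := by
    intro n
    have h1 : pp n (1 : G) ≤ Mx G n := pp_le_Mx (mem_Nf.mpr (one_mem _))
    have h2 : mx G n ≤ pp n (1 : G) := mx_le_pp (mem_Nf.mpr (one_mem _))
    obtain ⟨h3, h4⟩ := hmid n
    rw [abs_sub_le_iff]
    constructor <;> simp only [hD] <;> [linarith; linarith]
  have hppt : Filter.Tendsto (fun n => pp n (1 : G)) Filter.atTop (nhds c) := by
    have h0 : Filter.Tendsto (fun n => pp n (1 : G) - c) Filter.atTop (nhds 0) :=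
      squeeze_zero_norm (fun n => by simpa [Real.norm_eq_abs] using habs n) hDtend
    have h1 := h0.add_const c
    simpa using h1
  have hfun : ∀ n : ℕ,
      (Nat.card {v : Fin n → G // ((List.ofFn v).map fun g => g ^ 2).prod = 1} : ℝ) /
        (Fintype.card G : ℝ) ^ ((n : ℤ) - 1) = (Fintype.card G : ℝ) * pp n (1 : G) := by
    intro n
    have hcnt : Nat.card {v : Fin n → G // ((List.ofFn v).map fun g => g ^ 2).prod = 1}
        = cnt n (1 : G) := by
      rw [Nat.card_eq_fintype_card, cnt]
      exact Fintype.card_subtype _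
    have hz : (Fintype.card G : ℝ) ^ ((n : ℤ) - 1)
        = (Fintype.card G : ℝ) ^ n / (Fintype.card G : ℝ) := by
      rw [zpow_sub₀ (ne_of_gt cardG_pos), zpow_natCast, zpow_one]
    rw [hcnt, hz, pp, div_div_eq_mul_div]
    ring
  have hidx : ((Subgroup.closure (Set.range fun g : G => g ^ 2)).index : ℝ)
      = (Fintype.card G : ℝ) * c := by
    have h1 := Subgroup.card_mul_index (Subgroup.closure (Set.range fun g : G => g ^ 2))
    have h2 : (Nf G).card
        = Nat.card ↥(Subgroup.closure (Set.range fun g : G => g ^ 2)) := by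
      rw [Nf, ← Set.ncard_eq_toFinset_card, ← Nat.card_coe_set_eq]
      rfl
    have h3 : Nat.card G = Fintype.card G := Nat.card_eq_fintype_card
    have key : ((Nf G).card : ℝ) * ((Subgroup.closure (Set.range fun g : G => g ^ 2)).index : ℝ)
        = (Fintype.card G : ℝ) := by
      rw [h2]
      exact_mod_cast congrArg (Nat.cast : ℕ → ℝ) (h1.trans h3)
    have hne : ((Nf G).card : ℝ) ≠ 0 := ne_of_gt hcardNf_pos
    rw [hc]
    field_simp
    linear_combination key
  rw [show (fun n : ℕ =>
      (Nat.card {v : Fin n → G // ((List.ofFn v).map fun g => g ^ 2).prod = 1} : ℝ) /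
        (Fintype.card G : ℝ) ^ ((n : ℤ) - 1)) = fun n => (Fintype.card G : ℝ) * pp n (1 : G)
    from funext hfun, hidx]
  exact hppt.const_mul _
end
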